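/- Under the subspace correction setting with A symmetric positive definite, exact local solvers Rⱼ = Aⱼ⁻¹ (assuming each Aⱼ = Πⱼᵗ A Πⱼ is SPD), and Pⱼ : V → Vⱼ the A-orthogonal-type operator defined by ⟨Pⱼ v, vⱼ⟩_{Aⱼ} = ⟨v, Πⱼ vⱼ⟩_A, the successive subspace correction error propagator satisfies the Xu–Zikatanov identity: ‖(I − T_J)⋯(I − T₁)‖_A² = 1 − 1/(1 + c₀), where Tⱼ = Πⱼ Aⱼ⁻¹ Πⱼᵗ A and c₀ = sup_{‖v‖_A = 1} inf_{∑ Πⱼvⱼ = v} ∑_{i=1}^J ‖ Pᵢ ∑_{j>i} Πⱼ vⱼ ‖_{Aᵢ}². -/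

import Mathlib

open scoped RealInnerProductSpace

section aux
variable {M : Type*} [Ring M]

def XZF (B : ℕ → M) : ℕ → M
  | 0 => 1
  | k+1 => B k * XZF B k

def XZG (B : ℕ → M) : ℕ → ℕ → M
  | 0, _ => 1
  | n+1, k => B k * XZG B n (k+1)

lemma XZF_list (B : ℕ → M) :
    ∀ m, (List.ofFn fun t : Fin m => B (m - 1 - t.val)).prod = XZF B m := by
  intro m
  induction m with
  | zero => simp [XZF]
  | succ n ih =>
    rw [List.ofFn_succ, List.prod_cons]
    have h1 : (List.ofFn fun t : Fin n => B (n + 1 - 1 - (t.succ : Fin (n+1)).val)) =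
        (List.ofFn fun t : Fin n => B (n - 1 - t.val)) := by
      congr 1; funext t; congr 1; simp only [Fin.val_succ]; omega
    rw [h1, ih]
    show B (n + 1 - 1 - 0) * XZF B n = XZF B (n+1)
    have : n + 1 - 1 - 0 = n := by omega
    rw [this, XZF]
lemma XZcs {n : ℕ} {W : Type*} [NormedAddCommGroup W] [InnerProductSpace ℝ W]
    (A : W →ₗ[ℝ] W) (hA0 : ∀ v : W, 0 ≤ ⟪A v, v⟫)
    (hCS' : ∀ u v : W, ⟪A u, v⟫ ≤ Real.sqrt ⟪A u, u⟫ * Real.sqrt ⟪A v, v⟫)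
    (s t : Fin n → W) :
    (∑ i : Fin n, ⟪A (s i), t i⟫)
      ≤ Real.sqrt ((∑ i : Fin n, ⟪A (s i), s i⟫) * (∑ i : Fin n, ⟪A (t i), t i⟫)) := by
  have step2 := Finset.sum_mul_sq_le_sq_mul_sq Finset.univ
      (fun i : Fin n => Real.sqrt ⟪A (s i), s i⟫) (fun i : Fin n => Real.sqrt ⟪A (t i), t i⟫)
  have step2' : (∑ i : Fin n, Real.sqrt ⟪A (s i), s i⟫ * Real.sqrt ⟪A (t i), t i⟫)^2
      ≤ (∑ i : Fin n, ⟪A (s i), s i⟫) * (∑ i : Fin n, ⟪A (t i), t i⟫) := by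
    have es : (∑ i : Fin n, Real.sqrt ⟪A (s i), s i⟫ ^ 2) = ∑ i : Fin n, ⟪A (s i), s i⟫ :=
      Finset.sum_congr rfl fun i _ => Real.sq_sqrt (hA0 _)
    have et : (∑ i : Fin n, Real.sqrt ⟪A (t i), t i⟫ ^ 2) = ∑ i : Fin n, ⟪A (t i), t i⟫ :=
      Finset.sum_congr rfl fun i _ => Real.sq_sqrt (hA0 _)
    calc (∑ i : Fin n, Real.sqrt ⟪A (s i), s i⟫ * Real.sqrt ⟪A (t i), t i⟫)^2
        ≤ (∑ i : Fin n, Real.sqrt ⟪A (s i), s i⟫ ^ 2)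
          * (∑ i : Fin n, Real.sqrt ⟪A (t i), t i⟫ ^ 2) := step2
      _ = (∑ i : Fin n, ⟪A (s i), s i⟫) * (∑ i : Fin n, ⟪A (t i), t i⟫) := by rw [es, et]
  have hZnn : (0:ℝ) ≤ ∑ i : Fin n, Real.sqrt ⟪A (s i), s i⟫ * Real.sqrt ⟪A (t i), t i⟫ :=
    Finset.sum_nonneg fun i _ => mul_nonneg (Real.sqrt_nonneg _) (Real.sqrt_nonneg _)
  calc (∑ i : Fin n, ⟪A (s i), t i⟫)
      ≤ ∑ i : Fin n, Real.sqrt ⟪A (s i), s i⟫ * Real.sqrt ⟪A (t i), t i⟫ :=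
        Finset.sum_le_sum fun i _ => hCS' _ _
    _ = Real.sqrt ((∑ i : Fin n, Real.sqrt ⟪A (s i), s i⟫ * Real.sqrt ⟪A (t i), t i⟫)^2) :=
        (Real.sqrt_sq hZnn).symm
    _ ≤ _ := Real.sqrt_le_sqrt step2'

end aux

set_option maxHeartbeats 3000000

theorem stmt_16
    {J : ℕ} {V : Fin J → Type*} [∀ j, NormedAddCommGroup (V j)]
    [∀ j, InnerProductSpace ℝ (V j)] [∀ j, FiniteDimensional ℝ (V j)]
    {𝒱 : Type*} [NormedAddCommGroup 𝒱] [InnerProductSpace ℝ 𝒱] [FiniteDimensional ℝ 𝒱]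
    (A : 𝒱 →ₗ[ℝ] 𝒱) (hAsym : A.IsSymmetric) (hApos : ∀ v : 𝒱, v ≠ 0 → 0 < ⟪A v, v⟫)
    (P : ∀ j : Fin J, V j →ₗ[ℝ] 𝒱)
    (hdecomp : ∀ v : 𝒱, ∃ w : ∀ j, V j, ∑ j : Fin J, P j (w j) = v)
    (Aj : ∀ j : Fin J, V j →ₗ[ℝ] V j)
    (hAj : ∀ j, Aj j = LinearMap.adjoint (P j) ∘ₗ A ∘ₗ P j)
    (hAjsym : ∀ j, (Aj j).IsSymmetric) (hAjpos : ∀ j, ∀ x : V j, x ≠ 0 → 0 < ⟪Aj j x, x⟫)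
    (Ajinv : ∀ j : Fin J, V j →ₗ[ℝ] V j)
    (h1 : ∀ j, Aj j ∘ₗ Ajinv j = LinearMap.id) (h2 : ∀ j, Ajinv j ∘ₗ Aj j = LinearMap.id)
    (T : ∀ j : Fin J, 𝒱 →ₗ[ℝ] 𝒱)
    (hT : ∀ j, T j = P j ∘ₗ Ajinv j ∘ₗ LinearMap.adjoint (P j) ∘ₗ A)
    (PP : ∀ j : Fin J, 𝒱 →ₗ[ℝ] V j)
    (hPP : ∀ j, ∀ v : 𝒱, ∀ vj : V j, ⟪Aj j (PP j v), vj⟫ = ⟪A v, P j vj⟫)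
    (Eop : 𝒱 →ₗ[ℝ] 𝒱)
    (hEop : Eop = (List.ofFn fun t : Fin J => (1 : 𝒱 →ₗ[ℝ] 𝒱) - T t.rev).prod)
    (c0 : ℝ)
    (hc0 : c0 = sSup {y : ℝ | ∃ v : 𝒱, Real.sqrt ⟪A v, v⟫ = 1 ∧
      y = sInf {x : ℝ | ∃ w : ∀ j, V j, (∑ j : Fin J, P j (w j)) = v ∧
        x = ∑ i : Fin J,
          ⟪Aj i (PP i (∑ j ∈ Finset.univ.filter (fun j => i < j), P j (w j))),
            PP i (∑ j ∈ Finset.univ.filter (fun j => i < j), P j (w j))⟫}}) :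
    (sSup {y : ℝ | ∃ v : 𝒱, Real.sqrt ⟪A v, v⟫ = 1 ∧
        y = Real.sqrt ⟪A (Eop v), Eop v⟫}) ^ 2 = 1 - 1 / (1 + c0) := by
  -- ==================== basic positivity facts ====================
  have hA0 : ∀ v : 𝒱, 0 ≤ ⟪A v, v⟫ := by
    intro v
    by_cases h : v = 0
    · simp [h]
    · exact (hApos v h).le
  have hAdef : ∀ v : 𝒱, ⟪A v, v⟫ = 0 → v = 0 := by
    intro v h
    by_contra hv
    exact absurd h (ne_of_gt (hApos v hv))
  have hsym : ∀ u v : 𝒱, ⟪A u, v⟫ = ⟪A v, u⟫ := by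
    intro u v; rw [hAsym u v, real_inner_comm]
  have hAj0 : ∀ j (x : V j), 0 ≤ ⟪Aj j x, x⟫ := by
    intro j x
    by_cases h : x = 0
    · simp [h]
    · exact (hAjpos j x h).le
  -- Cauchy-Schwarz for the A-form
  have hCS : ∀ u v : 𝒱, ⟪A u, v⟫ ^ 2 ≤ ⟪A u, u⟫ * ⟪A v, v⟫ := by
    intro u v
    have hq : ∀ t : ℝ, 0 ≤ ⟪A v, v⟫ * (t * t) + (2 * ⟪A u, v⟫) * t + ⟪A u, u⟫ := by
      intro t
      have h0 := hA0 (u + t • v)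
      have : ⟪A (u + t • v), u + t • v⟫ =
          ⟪A v, v⟫ * (t * t) + (2 * ⟪A u, v⟫) * t + ⟪A u, u⟫ := by
        simp only [map_add, map_smul, inner_add_left, inner_add_right, inner_smul_left,
          inner_smul_right, RCLike.ofReal_real_eq_id, id_eq, conj_trivial]
        rw [hsym v u]
        ring
      linarith [this ▸ h0]
    have hd := discrim_le_zero hq
    rw [discrim] at hd
    nlinarith [hd]
  have hCS' : ∀ u v : 𝒱, ⟪A u, v⟫ ≤ Real.sqrt ⟪A u, u⟫ * Real.sqrt ⟪A v, v⟫ := by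
    intro u v
    have h2' : ⟪A u, v⟫ ≤ |⟪A u, v⟫| := le_abs_self _
    have h3 : |⟪A u, v⟫| = Real.sqrt (⟪A u, v⟫ ^ 2) := (Real.sqrt_sq_eq_abs _).symm
    calc ⟪A u, v⟫ ≤ Real.sqrt (⟪A u, v⟫ ^ 2) := h3 ▸ h2'
    _ ≤ Real.sqrt (⟪A u, u⟫ * ⟪A v, v⟫) := Real.sqrt_le_sqrt (hCS u v)
    _ = Real.sqrt ⟪A u, u⟫ * Real.sqrt ⟪A v, v⟫ := Real.sqrt_mul (hA0 u) _
  -- ==================== operator lemmas ====================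
  have hAjapp : ∀ j (x : V j), Aj j x = LinearMap.adjoint (P j) (A (P j x)) := by
    intro j x; rw [hAj j]; rfl
  have h2app : ∀ j (x : V j), Ajinv j (Aj j x) = x := by
    intro j x
    have := LinearMap.ext_iff.mp (h2 j) x
    simpa using this
  have h1app : ∀ j (x : V j), Aj j (Ajinv j x) = x := by
    intro j x
    have := LinearMap.ext_iff.mp (h1 j) x
    simpa using this
  have hTapp : ∀ j (v : 𝒱), T j v = P j (Ajinv j (LinearMap.adjoint (P j) (A v))) := by
    intro j v; rw [hT j]; rfl
  have hTP : ∀ j (x : V j), T j (P j x) = P j x := by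
    intro j x
    rw [hTapp, ← hAjapp, h2app]
  have hTT : ∀ j (v : 𝒱), T j (T j v) = T j v := by
    intro j v
    rw [hTapp j v, hTP]
  have hRsym : ∀ j (y z : V j), ⟪Ajinv j y, z⟫ = ⟪y, Ajinv j z⟫ := by
    intro j y z
    conv_lhs => rw [← h1app j z]
    rw [← hAjsym j]
    conv_rhs => rw [← h1app j y]
  have hadjPA : ∀ j (u v : 𝒱), ⟪A (P j (Ajinv j (LinearMap.adjoint (P j) (A u)))), v⟫ =
      ⟪Ajinv j (LinearMap.adjoint (P j) (A u)), LinearMap.adjoint (P j) (A v)⟫ := by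
    intro j u v
    rw [hAsym, real_inner_comm, ← LinearMap.adjoint_inner_left, real_inner_comm]
  have hTsym : ∀ j (u v : 𝒱), ⟪A (T j u), v⟫ = ⟪A u, T j v⟫ := by
    intro j u v
    have L : ⟪A (T j u), v⟫ =
        ⟪Ajinv j (LinearMap.adjoint (P j) (A u)), LinearMap.adjoint (P j) (A v)⟫ := by
      rw [hTapp j u, hadjPA]
    have R : ⟪A u, T j v⟫ =
        ⟪Ajinv j (LinearMap.adjoint (P j) (A v)), LinearMap.adjoint (P j) (A u)⟫ := by
      rw [hsym, hTapp j v, hadjPA]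
    rw [L, R, hRsym, real_inner_comm]
  have hPPapp : ∀ j (v : 𝒱), PP j v = Ajinv j (LinearMap.adjoint (P j) (A v)) := by
    intro j v
    have hAjinj : Function.Injective (Aj j) := by
      intro a b hab
      by_contra hne
      have hd : Aj j (a - b) = 0 := by rw [map_sub, hab, sub_self]
      have hnz : a - b ≠ 0 := sub_ne_zero.mpr hne
      have hp := hAjpos j (a - b) hnz
      rw [hd] at hp
      simp at hp
    apply hAjinj
    rw [h1app]
    apply ext_inner_right ℝ
    intro x
    rw [hPP j v x, LinearMap.adjoint_inner_left, hsym, real_inner_comm]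
  have hPPT : ∀ j (v : 𝒱), P j (PP j v) = T j v := by
    intro j v
    rw [hPPapp, hTapp]
  have hPnorm : ∀ j (x : V j), ⟪A (P j x), P j x⟫ = ⟪Aj j x, x⟫ := by
    intro j x
    rw [hAjapp, LinearMap.adjoint_inner_left]
  have hPPnorm : ∀ j (v : 𝒱), ⟪Aj j (PP j v), PP j v⟫ = ⟪A (T j v), T j v⟫ := by
    intro j v
    rw [hPP j v, hPPT, hTsym, hTT, hsym]
  have hTleft : ∀ j (u z : 𝒱), ⟪A u, T j z⟫ = ⟪A (T j u), T j z⟫ := by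
    intro j u z
    rw [hTsym j u, hTT, ← hTsym]
  -- ==================== product operators ====================
  classical
  set Tn : ℕ → (𝒱 →ₗ[ℝ] 𝒱) := fun k => if h : k < J then T ⟨k, h⟩ else 0 with hTn
  set Bf : ℕ → (𝒱 →ₗ[ℝ] 𝒱) := fun k => 1 - Tn k with hBf
  set F : ℕ → (𝒱 →ₗ[ℝ] 𝒱) := XZF Bf with hFdef
  set Gk : ℕ → (𝒱 →ₗ[ℝ] 𝒱) := fun k => XZG Bf (J - k) k with hGdef
  have hTnval : ∀ (k : ℕ) (hk : k < J), Tn k = T ⟨k, hk⟩ := by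
    intro k hk; rw [hTn]; simp [dif_pos hk]
  have hF0 : ∀ w : 𝒱, F 0 w = w := by intro w; rw [hFdef]; rfl
  have hFsucc : ∀ (k : ℕ) (w : 𝒱), F (k+1) w = F k w - Tn k (F k w) := by
    intro k w
    rw [hFdef]
    show XZF Bf (k+1) w = XZF Bf k w - Tn k (XZF Bf k w)
    rw [XZF, Module.End.mul_apply, hBf]
    simp [LinearMap.sub_apply]
  have hGJ : ∀ w : 𝒱, Gk J w = w := by
    intro w; rw [hGdef]; simp [Nat.sub_self, XZG]
  have hGsucc : ∀ (k : ℕ) (hk : k < J) (w : 𝒱), Gk k w = Bf k (Gk (k+1) w) := by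
    intro k hk w
    simp only [hGdef]
    have hJk : J - k = (J - (k+1)) + 1 := by omega
    rw [hJk, XZG, Module.End.mul_apply]
  have hEopF : ∀ w : 𝒱, Eop w = F J w := by
    have hfun : (fun t : Fin J => (1 : 𝒱 →ₗ[ℝ] 𝒱) - T t.rev)
        = fun t : Fin J => Bf (J - 1 - t.val) := by
      funext t
      have hlt : J - 1 - t.val < J := by have := t.isLt; omega
      simp only [hBf]
      rw [hTnval _ hlt]
      have hrev : t.rev = ⟨J - 1 - t.val, hlt⟩ := by
        apply Fin.ext
        simp only [Fin.val_rev]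
        omega
      rw [hrev]
    have hEF : Eop = F J := by
      rw [hEop, hfun, XZF_list, hFdef]
    intro w; rw [hEF]
  -- ==================== sum helpers ====================
  have hswap : ∀ f : Fin J → Fin J → ℝ,
      (∑ i : Fin J, ∑ k ∈ Finset.univ.filter (fun k => k < i), f i k) =
      (∑ k : Fin J, ∑ i ∈ Finset.univ.filter (fun i => k < i), f i k) := by
    intro f
    simp only [Finset.sum_filter]
    exact Finset.sum_comm
  have hsplit : ∀ (g : Fin J → ℝ) (j : Fin J),
      (∑ i : Fin J, g i) = (∑ i ∈ Finset.univ.filter (fun i => i < j), g i) + g j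
        + ∑ i ∈ Finset.univ.filter (fun i => j < i), g i := by
    intro g j
    have h := Finset.sum_filter_add_sum_filter_not Finset.univ (fun i => i < j) g
    have hins : Finset.univ.filter (fun i : Fin J => ¬ i < j)
        = insert j (Finset.univ.filter (fun i => j < i)) := by
      ext i
      simp only [Finset.mem_filter, Finset.mem_insert, Finset.mem_univ, true_and]
      constructor
      · intro hi
        rcases (not_lt.mp hi).lt_or_eq with h'|h'
        · exact Or.inr h'
        · exact Or.inl h'.symm
      · rintro (rfl|h')
        · exact lt_irrefl _
        · exact not_lt.mpr h'.le
    rw [hins, Finset.sum_insert (by simp)] at h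
    linarith [h]
  have hfin2nat : ∀ (g : ℕ → ℝ) (i : Fin J),
      (∑ k ∈ Finset.univ.filter (fun k : Fin J => k < i), g k.val)
        = ∑ k ∈ Finset.range i.val, g k := by
    intro g i
    rw [Finset.sum_filter]
    have e1 : (∑ k : Fin J, if k < i then g k.val else 0)
        = ∑ k : Fin J, (fun n => if n < i.val then g n else 0) k.val := by
      apply Finset.sum_congr rfl
      intro k _
      simp only [Fin.lt_def]
    rw [e1, Fin.sum_univ_eq_sum_range (fun n => if n < i.val then g n else 0) J,
      ← Finset.sum_filter]
    congr 1
    ext a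
    simp only [Finset.mem_filter, Finset.mem_range]
    have := i.isLt
    omega
  -- ==================== S function and telescoping ====================
  set Sfn : 𝒱 → ℝ := fun w => ∑ i : Fin J, ⟪A (T i (F i.val w)), T i (F i.val w)⟫ with hSfn
  have hFw : ∀ (w : 𝒱) (n : ℕ), n ≤ J → w - F n w = ∑ k ∈ Finset.range n, Tn k (F k w) := by
    intro w n
    induction n with
    | zero => intro _; simp [hF0]
    | succ n ih =>
      intro hn
      rw [Finset.sum_range_succ, ← ih (by omega), hFsucc]
      abel
  have hstep1 : ∀ (j : Fin J) (z : 𝒱), ⟪A (z - T j z), z - T j z⟫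
      = ⟪A z, z⟫ - ⟪A (T j z), T j z⟫ := by
    intro j z
    have e1 : ⟪A z, T j z⟫ = ⟪A (T j z), T j z⟫ := hTleft j z z
    have e2 : ⟪A (T j z), z⟫ = ⟪A z, T j z⟫ := hsym _ _
    simp only [map_sub, inner_sub_left, inner_sub_right]
    linarith
  have htel : ∀ (w : 𝒱) (n : ℕ), n ≤ J → ⟪A w, w⟫ - ⟪A (F n w), F n w⟫
      = ∑ k ∈ Finset.range n, ⟪A (Tn k (F k w)), Tn k (F k w)⟫ := by
    intro w n
    induction n with
    | zero => intro _; simp [hF0]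
    | succ n ih =>
      intro hn
      have hk : n < J := by omega
      rw [Finset.sum_range_succ, ← ih (by omega)]
      have hF1 : F (n+1) w = F n w - T ⟨n, hk⟩ (F n w) := by
        rw [hFsucc, hTnval n hk]
      rw [hF1, hstep1 ⟨n, hk⟩ (F n w), hTnval n hk]
      ring
  have hMain3 : ∀ w : 𝒱, ⟪A w, w⟫ - ⟪A (F J w), F J w⟫ = Sfn w := by
    intro w
    rw [htel w J le_rfl, hSfn]
    rw [← Fin.sum_univ_eq_sum_range (fun k => ⟪A (Tn k (F k w)), Tn k (F k w)⟫) J]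
    apply Finset.sum_congr rfl
    intro i _
    rw [hTnval i.val i.isLt]
  have hSnn : ∀ w : 𝒱, 0 ≤ Sfn w := by
    intro w
    rw [hSfn]
    exact Finset.sum_nonneg fun i _ => hA0 _
  have hS0 : ∀ w : 𝒱, Sfn w = 0 → w = 0 := by
    intro w hw
    rw [hSfn] at hw
    have hterm : ∀ i : Fin J, T i (F i.val w) = 0 := by
      intro i
      have := (Finset.sum_eq_zero_iff_of_nonneg (fun i _ => hA0 _)).mp hw i (Finset.mem_univ i)
      exact hAdef _ this
    have hFeq : ∀ n : ℕ, n ≤ J → F n w = w := by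
      intro n
      induction n with
      | zero => intro _; exact hF0 w
      | succ n ih =>
        intro hn
        have hk : n < J := by omega
        rw [hFsucc, hTnval n hk, ih (by omega)]
        have h0 : T ⟨n, hk⟩ (F (⟨n, hk⟩ : Fin J).val w) = 0 := hterm ⟨n, hk⟩
        simp only [] at h0
        rw [ih (by omega)] at h0
        rw [h0, sub_zero]
    have hTw : ∀ i : Fin J, T i w = 0 := by
      intro i
      have := hterm i
      rwa [hFeq i.val (le_of_lt i.isLt)] at this
    obtain ⟨y, hy⟩ := hdecomp w
    apply hAdef w
    have : ⟪A w, w⟫ = ⟪A w, ∑ j : Fin J, P j (y j)⟫ := by rw [hy]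
    rw [this, inner_sum]
    apply Finset.sum_eq_zero
    intro j _
    rw [← hTP j (y j), ← hTsym, hTw j]
    simp
  -- ==================== Main identity 1 ====================
  have hPT : ∀ (j : Fin J) (y : V j) (z : 𝒱), ⟪A (P j y), z⟫ = ⟪A (P j y), T j z⟫ := by
    intro j y z
    conv_rhs => rw [← hTsym j (P j y) z, hTP j y]
  have hfin2natA : ∀ (u w : 𝒱) (i : Fin J),
      (∑ k ∈ Finset.univ.filter (fun k : Fin J => k < i), ⟪A u, T k (F k.val w)⟫)
        = ∑ k ∈ Finset.range i.val, ⟪A u, Tn k (F k w)⟫ := by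
    intro u w i
    exact Finset.sum_bij'
      (fun (k : Fin J) _ => k.val)
      (fun (n : ℕ) (hn : n ∈ Finset.range i.val) =>
        (⟨n, lt_trans (Finset.mem_range.mp hn) i.isLt⟩ : Fin J))
      (fun a ha => Finset.mem_range.mpr ((Finset.mem_filter.mp ha).2))
      (fun a ha => Finset.mem_filter.mpr ⟨Finset.mem_univ _,
        show (_ : ℕ) < _ from Finset.mem_range.mp ha⟩)
      (fun a ha => rfl)
      (fun a ha => rfl)
      (fun a ha => by rw [hTnval a.val a.isLt])
  have hMain1 : ∀ (x : ∀ j, V j) (w : 𝒱),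
      ⟪A (∑ j : Fin J, P j (x j)), w⟫
        = ∑ i : Fin J, ⟪A (P i (x i
            + PP i (∑ j ∈ Finset.univ.filter (fun j => i < j), P j (x j)))), T i (F i.val w)⟫ := by
    intro x w
    set Q : Fin J → 𝒱 := fun i => ∑ j ∈ Finset.univ.filter (fun j => i < j), P j (x j) with hQ
    have key : ∀ i : Fin J, ⟪A (P i (x i)), w⟫
        = ⟪A (P i (x i)), T i (F i.val w)⟫
          + ∑ k ∈ Finset.univ.filter (fun k => k < i), ⟪A (P i (x i)), T k (F k.val w)⟫ := by
      intro i
      have hw1 : w = F i.val w + (w - F i.val w) := by abel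
      conv_lhs => rw [hw1]
      rw [inner_add_right, hPT i (x i) (F i.val w)]
      congr 1
      rw [hFw w i.val (le_of_lt i.isLt), inner_sum, hfin2natA (P i (x i)) w i]
    calc ⟪A (∑ j : Fin J, P j (x j)), w⟫ = ∑ i : Fin J, ⟪A (P i (x i)), w⟫ := by
          rw [map_sum, sum_inner]
      _ = (∑ i : Fin J, ⟪A (P i (x i)), T i (F i.val w)⟫)
          + ∑ i : Fin J, ∑ k ∈ Finset.univ.filter (fun k => k < i),
              ⟪A (P i (x i)), T k (F k.val w)⟫ := by
          rw [← Finset.sum_add_distrib]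
          exact Finset.sum_congr rfl fun i _ => key i
      _ = (∑ i : Fin J, ⟪A (P i (x i)), T i (F i.val w)⟫)
          + ∑ k : Fin J, ⟪A (T k (Q k)), T k (F k.val w)⟫ := by
          congr 1
          rw [hswap (fun i k => ⟪A (P i (x i)), T k (F k.val w)⟫)]
          apply Finset.sum_congr rfl
          intro k _
          rw [← hTleft, hQ]
          rw [map_sum, sum_inner]
      _ = ∑ i : Fin J, ⟪A (P i (x i + PP i (Q i))), T i (F i.val w)⟫ := by
          rw [← Finset.sum_add_distrib]
          apply Finset.sum_congr rfl
          intro i _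
          rw [map_add, map_add, inner_add_left, hPPT]
  -- ==================== Main identity 2 ====================
  have hMain2 : ∀ (x : ∀ j, V j),
      (∑ i : Fin J, ⟪Aj i (x i + PP i (∑ j ∈ Finset.univ.filter (fun j => i < j), P j (x j))),
          x i + PP i (∑ j ∈ Finset.univ.filter (fun j => i < j), P j (x j))⟫)
        = ⟪A (∑ j : Fin J, P j (x j)), ∑ j : Fin J, P j (x j)⟫
          + ∑ i : Fin J, ⟪Aj i (PP i (∑ j ∈ Finset.univ.filter (fun j => i < j), P j (x j))),
              PP i (∑ j ∈ Finset.univ.filter (fun j => i < j), P j (x j))⟫ := by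
    intro x
    set Q : Fin J → 𝒱 := fun i => ∑ j ∈ Finset.univ.filter (fun j => i < j), P j (x j) with hQ
    set u : 𝒱 := ∑ j : Fin J, P j (x j) with hu
    have hcross : ∀ i : Fin J, ⟪Aj i (x i), PP i (Q i)⟫ = ⟪A (Q i), P i (x i)⟫ := by
      intro i
      rw [hAjsym i, real_inner_comm, hPP]
    have hterm : ∀ i : Fin J, ⟪Aj i (x i + PP i (Q i)), x i + PP i (Q i)⟫
        = ⟪A (P i (x i)), P i (x i)⟫ + 2 * ⟪A (Q i), P i (x i)⟫
          + ⟪Aj i (PP i (Q i)), PP i (Q i)⟫ := by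
      intro i
      rw [map_add, inner_add_left, inner_add_right, inner_add_right]
      rw [← hPnorm i (x i), hcross i, hPP i (Q i) (x i)]
      ring
    have expand : ⟪A u, u⟫ = ∑ i : Fin J, ∑ j : Fin J, ⟪A (P i (x i)), P j (x j)⟫ := by
      rw [hu, map_sum, sum_inner]
      apply Finset.sum_congr rfl
      intro i _
      rw [inner_sum]
    have e3 : ∀ i : Fin J, (∑ j : Fin J, ⟪A (P i (x i)), P j (x j)⟫)
        = (∑ j ∈ Finset.univ.filter (fun j => j < i), ⟪A (P i (x i)), P j (x j)⟫)
          + ⟪A (P i (x i)), P i (x i)⟫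
          + ∑ j ∈ Finset.univ.filter (fun j => i < j), ⟪A (P i (x i)), P j (x j)⟫ :=
      fun i => hsplit (fun j => ⟪A (P i (x i)), P j (x j)⟫) i
    have h4 : (∑ i : Fin J, ∑ j ∈ Finset.univ.filter (fun j => j < i),
          ⟪A (P i (x i)), P j (x j)⟫)
        = ∑ k : Fin J, ⟪A (Q k), P k (x k)⟫ := by
      rw [hswap (fun i j => ⟪A (P i (x i)), P j (x j)⟫)]
      apply Finset.sum_congr rfl
      intro k _
      rw [hQ, map_sum, sum_inner]
    have h5 : (∑ i : Fin J, ∑ j ∈ Finset.univ.filter (fun j => i < j),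
          ⟪A (P i (x i)), P j (x j)⟫)
        = ∑ k : Fin J, ⟪A (Q k), P k (x k)⟫ := by
      apply Finset.sum_congr rfl
      intro i _
      rw [← inner_sum, hsym, hQ]
    have huu : ⟪A u, u⟫ = (∑ i : Fin J, ⟪A (P i (x i)), P i (x i)⟫)
        + 2 * ∑ k : Fin J, ⟪A (Q k), P k (x k)⟫ := by
      rw [expand, Finset.sum_congr rfl (fun i _ => e3 i), Finset.sum_add_distrib,
        Finset.sum_add_distrib, h4, h5]
      ring
    rw [Finset.sum_congr rfl (fun i _ => hterm i), Finset.sum_add_distrib,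
      Finset.sum_add_distrib, huu, ← Finset.mul_sum]
  -- ==================== adjoint of G, operator B ====================
  have hBfapp : ∀ (k : ℕ) (v' : 𝒱), Bf k v' = v' - Tn k v' := by
    intro k v'; rw [hBf]; simp [LinearMap.sub_apply]
  have hGadj : ∀ (z y : 𝒱), ⟪A (Gk 0 z), y⟫ = ⟪A z, F J y⟫ := by
    have main : ∀ d : ℕ, ∀ k : ℕ, k + d = J → ∀ z y : 𝒱,
        ⟪A (Gk k z), F k y⟫ = ⟪A z, F J y⟫ := by
      intro d
      induction d with
      | zero =>
        intro k hk z y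
        have hkJ : k = J := by omega
        rw [hkJ, hGJ]
      | succ n ih =>
        intro k hk z y
        have hkJ : k < J := by omega
        rw [hGsucc k hkJ z, hBfapp, hTnval k hkJ, map_sub, inner_sub_left, hTsym,
          ← inner_sub_right]
        have hFk : F k y - T ⟨k, hkJ⟩ (F k y) = F (k+1) y := by
          rw [hFsucc, hTnval k hkJ]
        rw [hFk]
        exact ih (k+1) (by omega) z y
    intro z y
    have h0 := main J 0 (by omega) z y
    rw [hF0] at h0
    exact h0
  set Bop : 𝒱 →ₗ[ℝ] 𝒱 := LinearMap.id - (Gk 0) ∘ₗ Eop with hBop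
  have hBopApp : ∀ w : 𝒱, Bop w = w - Gk 0 (Eop w) := by
    intro w; rw [hBop]; simp [LinearMap.sub_apply]
  have hSB : ∀ w : 𝒱, ⟪A (Bop w), w⟫ = Sfn w := by
    intro w
    rw [hBopApp, map_sub, inner_sub_left, hGadj (Eop w) w, hEopF w, ← hMain3 w]
  have hBopSurj : Function.Surjective Bop := by
    rw [← LinearMap.injective_iff_surjective]
    intro a b hab
    have hd : Bop (a - b) = 0 := by rw [map_sub, hab, sub_self]
    have hS' : Sfn (a - b) = 0 := by
      rw [← hSB, hd]
      simp
    have := hS0 _ hS'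
    exact sub_eq_zero.mp this
  -- ==================== KB : the construction ====================
  have hKB : ∀ v : 𝒱, ⟪A v, v⟫ = 1 → ∀ σ2 : ℝ, σ2 < 1 →
      (∀ u : 𝒱, (1 - σ2) * ⟪A u, u⟫ ≤ Sfn u) →
      ∃ x : ∀ j, V j, (∑ j : Fin J, P j (x j)) = v ∧
        (∑ i : Fin J, ⟪Aj i (PP i (∑ j ∈ Finset.univ.filter (fun j => i < j), P j (x j))),
            PP i (∑ j ∈ Finset.univ.filter (fun j => i < j), P j (x j))⟫)
          ≤ 1 / (1 - σ2) - 1 := by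
    intro v hv σ2 hσ2 hSlb
    obtain ⟨w, hw⟩ := hBopSurj v
    set q : ℕ → 𝒱 := fun k => F k w - Gk k (Eop w) with hq
    set x : ∀ j, V j := fun i => PP i (F i.val w - q (i.val + 1)) with hx
    have hqJ : q J = 0 := by
      simp only [hq]
      rw [hGJ, hEopF]
      exact sub_self _
    have hPx : ∀ (k : ℕ) (hk : k < J),
        P ⟨k, hk⟩ (x ⟨k, hk⟩) = T ⟨k, hk⟩ (F k w) - T ⟨k, hk⟩ (q (k + 1)) := by
      intro k hk
      simp only [hx, show (⟨k, hk⟩ : Fin J).val = k from rfl]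
      rw [hPPT, map_sub]
    have hqrec : ∀ (k : ℕ) (hk : k < J), q k = P ⟨k, hk⟩ (x ⟨k, hk⟩) + q (k+1) := by
      intro k hk
      rw [hPx k hk]
      simp only [hq]
      rw [hGsucc k hk, hBfapp, hTnval k hk, hFsucc k w, hTnval k hk]
      simp only [map_sub]
      rw [hTT]
      abel
    have hsumtail : ∀ (d : ℕ) (k : ℕ), k + d = J →
        (∑ j ∈ Finset.univ.filter (fun j : Fin J => k ≤ j.val), P j (x j)) = q k := by
      intro d
      induction d with
      | zero =>
        intro k hk
        have hkJ : k = J := by omega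
        have hemp : Finset.univ.filter (fun j : Fin J => k ≤ j.val) = ∅ := by
          ext j
          simp only [Finset.mem_filter, Finset.mem_univ, true_and, Finset.notMem_empty,
            iff_false]
          have := j.isLt
          omega
        rw [hemp, Finset.sum_empty, hkJ, hqJ]
      | succ n ih =>
        intro k hk
        have hkJ : k < J := by omega
        have hins : Finset.univ.filter (fun j : Fin J => k ≤ j.val)
            = insert (⟨k, hkJ⟩ : Fin J)
                (Finset.univ.filter (fun j : Fin J => k + 1 ≤ j.val)) := by
          ext j
          simp only [Finset.mem_filter, Finset.mem_univ, true_and, Finset.mem_insert]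
          constructor
          · intro hj
            rcases eq_or_lt_of_le hj with h'|h'
            · exact Or.inl (Fin.ext h'.symm)
            · exact Or.inr h'
          · rintro (rfl|h')
            · exact le_refl _
            · omega
        have hnotmem : (⟨k, hkJ⟩ : Fin J) ∉
            Finset.univ.filter (fun j : Fin J => k + 1 ≤ j.val) := by
          simp only [Finset.mem_filter, Finset.mem_univ, true_and]
          omega
        rw [hins, Finset.sum_insert hnotmem, ih (k+1) (by omega), ← hqrec k hkJ]
    have hdec : (∑ j : Fin J, P j (x j)) = v := by
      have h0 := hsumtail J 0 (by omega)
      have huniv : Finset.univ.filter (fun j : Fin J => 0 ≤ j.val) = Finset.univ := by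
        ext j; simp
      rw [huniv] at h0
      rw [h0]
      simp only [hq]
      rw [hF0, ← hBopApp, hw]
    have hQq : ∀ i : Fin J, (∑ j ∈ Finset.univ.filter (fun j => i < j), P j (x j))
        = q (i.val + 1) := by
      intro i
      have h0 := hsumtail (J - (i.val+1)) (i.val+1) (by have := i.isLt; omega)
      rw [← h0]
      apply Finset.sum_congr
      · ext j
        simp only [Finset.mem_filter, Finset.mem_univ, true_and, Fin.lt_def]
        omega
      · intros; rfl
    refine ⟨x, hdec, ?_⟩
    have hxq : ∀ i : Fin J, x i + PP i (q (i.val+1)) = PP i (F i.val w) := by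
      intro i
      simp only [hx]
      rw [← map_add, sub_add_cancel]
    have hDx : (∑ i : Fin J,
        ⟪Aj i (PP i (∑ j ∈ Finset.univ.filter (fun j => i < j), P j (x j))),
            PP i (∑ j ∈ Finset.univ.filter (fun j => i < j), P j (x j))⟫) = Sfn w - 1 := by
      have hM2 := hMain2 x
      rw [hdec, hv] at hM2
      have hL : (∑ i : Fin J,
          ⟪Aj i (x i + PP i (∑ j ∈ Finset.univ.filter (fun j => i < j), P j (x j))),
              x i + PP i (∑ j ∈ Finset.univ.filter (fun j => i < j), P j (x j))⟫) = Sfn w := by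
        rw [hSfn]
        apply Finset.sum_congr rfl
        intro i _
        rw [hQq i, hxq i, hPPnorm]
      rw [hL] at hM2
      linarith [hM2]
    rw [hDx]
    -- numeric bound on Sfn w
    have hSw : Sfn w = ⟪A v, w⟫ := by rw [← hSB w, hw]
    have ht0 : (0:ℝ) ≤ Real.sqrt ⟪A w, w⟫ := Real.sqrt_nonneg _
    have ht2 : (Real.sqrt ⟪A w, w⟫)^2 = ⟪A w, w⟫ := Real.sq_sqrt (hA0 w)
    have hupper : Sfn w ≤ Real.sqrt ⟪A w, w⟫ := by
      rw [hSw]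
      calc ⟪A v, w⟫ ≤ Real.sqrt ⟪A v, v⟫ * Real.sqrt ⟪A w, w⟫ := hCS' v w
        _ = Real.sqrt ⟪A w, w⟫ := by rw [hv, Real.sqrt_one, one_mul]
    have hlower := hSlb w
    have hpos : 0 < 1 - σ2 := by linarith
    have htle : Real.sqrt ⟪A w, w⟫ ≤ 1 / (1 - σ2) := by
      rcases eq_or_lt_of_le ht0 with h'|h'
      · rw [← h']
        positivity
      · have h'' : (1 - σ2) * (Real.sqrt ⟪A w, w⟫ * Real.sqrt ⟪A w, w⟫)
            ≤ Real.sqrt ⟪A w, w⟫ := by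
          have h5 := hlower
          rw [← ht2, pow_two] at h5
          linarith [hupper]
        rw [le_div_iff₀ hpos]
        have h3 : ((1 - σ2) * Real.sqrt ⟪A w, w⟫) * Real.sqrt ⟪A w, w⟫
            ≤ 1 * Real.sqrt ⟪A w, w⟫ := by
          rw [one_mul, mul_assoc]
          exact h''
        have h4 := le_of_mul_le_mul_right h3 h'
        linarith [h4, mul_comm (Real.sqrt ⟪A w, w⟫) (1 - σ2)]
    linarith [hupper, htle]
  -- ==================== KA : lower bound ====================
  have hKA : ∀ v : 𝒱, ⟪A v, v⟫ = 1 → ∀ x : ∀ j, V j, (∑ j : Fin J, P j (x j)) = v →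
      1 ≤ (1 + ∑ i : Fin J,
          ⟪Aj i (PP i (∑ j ∈ Finset.univ.filter (fun j => i < j), P j (x j))),
            PP i (∑ j ∈ Finset.univ.filter (fun j => i < j), P j (x j))⟫) * Sfn v := by
    intro v hv x hxv
    have hm1 := hMain1 x v
    rw [hxv, hv] at hm1
    have hsum_s : (∑ i : Fin J,
        ⟪A (P i (x i + PP i (∑ j ∈ Finset.univ.filter (fun j => i < j), P j (x j)))),
          P i (x i + PP i (∑ j ∈ Finset.univ.filter (fun j => i < j), P j (x j)))⟫)
        = 1 + ∑ i : Fin J,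
            ⟪Aj i (PP i (∑ j ∈ Finset.univ.filter (fun j => i < j), P j (x j))),
              PP i (∑ j ∈ Finset.univ.filter (fun j => i < j), P j (x j))⟫ := by
      have h := hMain2 x
      rw [hxv, hv] at h
      rw [← h]
      apply Finset.sum_congr rfl
      intro i _
      exact hPnorm i _
    have hsum_t : (∑ i : Fin J, ⟪A (T i (F i.val v)), T i (F i.val v)⟫) = Sfn v := by
      rw [hSfn]
    have hcs := XZcs A hA0 hCS'
        (fun i : Fin J =>
          P i (x i + PP i (∑ j ∈ Finset.univ.filter (fun j => i < j), P j (x j))))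
        (fun i : Fin J => T i (F i.val v))
    have h1' : (1:ℝ) ≤ Real.sqrt ((∑ i : Fin J,
        ⟪A (P i (x i + PP i (∑ j ∈ Finset.univ.filter (fun j => i < j), P j (x j)))),
          P i (x i + PP i (∑ j ∈ Finset.univ.filter (fun j => i < j), P j (x j)))⟫)
        * (∑ i : Fin J, ⟪A (T i (F i.val v)), T i (F i.val v)⟫)) := by
      calc (1:ℝ) = ∑ i : Fin J,
          ⟪A (P i (x i + PP i (∑ j ∈ Finset.univ.filter (fun j => i < j), P j (x j)))),
            T i (F i.val v)⟫ := hm1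
        _ ≤ _ := hcs
    have hnn : (0:ℝ) ≤ (∑ i : Fin J,
        ⟪A (P i (x i + PP i (∑ j ∈ Finset.univ.filter (fun j => i < j), P j (x j)))),
          P i (x i + PP i (∑ j ∈ Finset.univ.filter (fun j => i < j), P j (x j)))⟫)
        * (∑ i : Fin J, ⟪A (T i (F i.val v)), T i (F i.val v)⟫) :=
      mul_nonneg (Finset.sum_nonneg fun i _ => hA0 _) (Finset.sum_nonneg fun i _ => hA0 _)
    have h2' : (1:ℝ) ≤ (∑ i : Fin J,
        ⟪A (P i (x i + PP i (∑ j ∈ Finset.univ.filter (fun j => i < j), P j (x j)))),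
          P i (x i + PP i (∑ j ∈ Finset.univ.filter (fun j => i < j), P j (x j)))⟫)
        * (∑ i : Fin J, ⟪A (T i (F i.val v)), T i (F i.val v)⟫) := by
      nlinarith [h1', Real.sq_sqrt hnn]
    rw [← hsum_s, ← hsum_t]
    exact h2'
  -- ==================== endgame ====================
  by_cases htriv : ∀ u : 𝒱, u = 0
  · have hSE : {y : ℝ | ∃ v : 𝒱, Real.sqrt ⟪A v, v⟫ = 1 ∧
        y = Real.sqrt ⟪A (Eop v), Eop v⟫} = ∅ := by
      ext y
      simp only [Set.mem_setOf_eq, Set.mem_empty_iff_false, iff_false, not_exists]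
      intro v hv
      obtain ⟨hv1, -⟩ := hv
      rw [htriv v] at hv1
      simp at hv1
    have hCE : {y : ℝ | ∃ v : 𝒱, Real.sqrt ⟪A v, v⟫ = 1 ∧
        y = sInf {x : ℝ | ∃ w : ∀ j, V j, (∑ j : Fin J, P j (w j)) = v ∧
          x = ∑ i : Fin J,
            ⟪Aj i (PP i (∑ j ∈ Finset.univ.filter (fun j => i < j), P j (w j))),
              PP i (∑ j ∈ Finset.univ.filter (fun j => i < j), P j (w j))⟫}} = ∅ := by
      ext y
      simp only [Set.mem_setOf_eq, Set.mem_empty_iff_false, iff_false, not_exists]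
      intro v hv
      obtain ⟨hv1, -⟩ := hv
      rw [htriv v] at hv1
      simp at hv1
    rw [hSE, Real.sSup_empty, hc0, hCE, Real.sSup_empty]
    norm_num
  · push_neg at htriv
    obtain ⟨v0, hv0⟩ := htriv
    haveI : Nontrivial 𝒱 := nontrivial_of_ne v0 0 hv0
    have hAcont : Continuous A := A.continuous_of_finiteDimensional
    have hEcont : Continuous Eop := Eop.continuous_of_finiteDimensional
    have hfc : Continuous fun v : 𝒱 => ⟪A v, v⟫ := Continuous.inner hAcont continuous_id
    have hscale : ∀ u : 𝒱, u ≠ 0 →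
        ⟪A ((Real.sqrt ⟪A u, u⟫)⁻¹ • u), (Real.sqrt ⟪A u, u⟫)⁻¹ • u⟫ = 1 := by
      intro u hu
      have hq := hApos u hu
      have hsne : Real.sqrt ⟪A u, u⟫ ≠ 0 := ne_of_gt (Real.sqrt_pos.mpr hq)
      rw [map_smul, real_inner_smul_left, real_inner_smul_right]
      rw [show ⟪A u, u⟫ = Real.sqrt ⟪A u, u⟫ * Real.sqrt ⟪A u, u⟫ from
        (Real.mul_self_sqrt (hA0 u)).symm]
      field_simp
      rw [Real.sqrt_sq (Real.sqrt_nonneg _)]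
    have hcpos : ∃ c : ℝ, 0 < c ∧ ∀ v : 𝒱, c * ‖v‖^2 ≤ ⟪A v, v⟫ := by
      obtain ⟨vm, hvm, hmin⟩ := (isCompact_sphere (0:𝒱) 1).exists_isMinOn
        (NormedSpace.sphere_nonempty.mpr zero_le_one) hfc.continuousOn
      have hvm1 : ‖vm‖ = 1 := by simpa using hvm
      have hvm0 : vm ≠ 0 := by
        intro h; rw [h] at hvm1; simp at hvm1
      refine ⟨⟪A vm, vm⟫, hApos vm hvm0, ?_⟩
      intro v
      by_cases hv : v = 0
      · simp [hv]
      · have hn : ‖v‖ ≠ 0 := norm_ne_zero_iff.mpr hv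
        have hnp : 0 < ‖v‖ := norm_pos_iff.mpr hv
        have hu : (‖v‖⁻¹ • v) ∈ Metric.sphere (0:𝒱) 1 := by
          simp [norm_smul, inv_mul_cancel₀ hn]
        have hle : ⟪A vm, vm⟫ ≤ ⟪A (‖v‖⁻¹ • v), ‖v‖⁻¹ • v⟫ := hmin hu
        have hfu : ⟪A (‖v‖⁻¹ • v), ‖v‖⁻¹ • v⟫ = ‖v‖⁻¹ * (‖v‖⁻¹ * ⟪A v, v⟫) := by
          rw [map_smul, real_inner_smul_left, real_inner_smul_right]
        rw [hfu] at hle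
        have e : ‖v‖⁻¹ * (‖v‖⁻¹ * ⟪A v, v⟫) * (‖v‖ * ‖v‖) = ⟪A v, v⟫ := by
          field_simp
        calc ⟪A vm, vm⟫ * ‖v‖^2 = ⟪A vm, vm⟫ * (‖v‖ * ‖v‖) := by ring
          _ ≤ (‖v‖⁻¹ * (‖v‖⁻¹ * ⟪A v, v⟫)) * (‖v‖ * ‖v‖) :=
              mul_le_mul_of_nonneg_right hle (by positivity)
          _ = ⟪A v, v⟫ := e
    obtain ⟨c, hcp, hcb⟩ := hcpos
    have hKclosed : IsClosed {v : 𝒱 | ⟪A v, v⟫ = 1} := by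
      have : {v : 𝒱 | ⟪A v, v⟫ = 1} = (fun v : 𝒱 => ⟪A v, v⟫) ⁻¹' {1} := rfl
      rw [this]
      exact isClosed_singleton.preimage hfc
    have hKbdd : Bornology.IsBounded {v : 𝒱 | ⟪A v, v⟫ = 1} := by
      apply Bornology.IsBounded.subset
        (Metric.isBounded_closedBall (x := (0:𝒱)) (r := Real.sqrt (1/c)))
      intro v hv
      simp only [Metric.mem_closedBall, dist_zero_right]
      have h1' : c * ‖v‖^2 ≤ 1 := by
        have := hcb v
        rw [hv] at this
        exact this
      rw [← Real.sqrt_sq (norm_nonneg v)]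
      apply Real.sqrt_le_sqrt
      rw [le_div_iff₀ hcp]
      linarith [h1', mul_comm c (‖v‖^2)]
    have hKcompact : IsCompact {v : 𝒱 | ⟪A v, v⟫ = 1} :=
      Metric.isCompact_of_isClosed_isBounded hKclosed hKbdd
    have hKne : Set.Nonempty {v : 𝒱 | ⟪A v, v⟫ = 1} :=
      ⟨(Real.sqrt ⟪A v0, v0⟫)⁻¹ • v0, hscale v0 hv0⟩
    have hgc : Continuous fun v : 𝒱 => Real.sqrt ⟪A (Eop v), Eop v⟫ :=
      Real.continuous_sqrt.comp (Continuous.inner (hAcont.comp hEcont) hEcont)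
    obtain ⟨vs, hvsK, hmax⟩ := hKcompact.exists_isMaxOn hKne hgc.continuousOn
    have hvsK' : ⟪A vs, vs⟫ = 1 := hvsK
    set σ : ℝ := Real.sqrt ⟪A (Eop vs), Eop vs⟫ with hσdef
    have hSEsup : sSup {y : ℝ | ∃ v : 𝒱, Real.sqrt ⟪A v, v⟫ = 1 ∧
        y = Real.sqrt ⟪A (Eop v), Eop v⟫} = σ := by
      apply le_antisymm
      · apply Real.sSup_le
        · rintro y ⟨v, hv1, rfl⟩
          exact hmax (Real.sqrt_eq_one.mp hv1)
        · exact Real.sqrt_nonneg _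
      · apply le_csSup
        · refine ⟨σ, ?_⟩
          rintro y ⟨v, hv1, rfl⟩
          exact hmax (Real.sqrt_eq_one.mp hv1)
        · exact ⟨vs, Real.sqrt_eq_one.mpr hvsK', rfl⟩
    have hσnn : 0 ≤ σ := Real.sqrt_nonneg _
    have hσ2 : σ^2 = ⟪A (Eop vs), Eop vs⟫ := Real.sq_sqrt (hA0 _)
    have hvs0 : vs ≠ 0 := by
      intro h
      rw [h] at hvsK'
      simp at hvsK'
    have hSvs : Sfn vs = 1 - σ^2 := by
      have h := hMain3 vs
      rw [← hEopF vs, hvsK'] at h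
      linarith [h, hσ2]
    have hSvspos : 0 < Sfn vs := by
      rcases eq_or_lt_of_le (hSnn vs) with h'|h'
      · exact absurd (hS0 vs h'.symm) hvs0
      · exact h'
    have hσlt : σ^2 < 1 := by linarith [hSvs, hSvspos]
    have hSlb : ∀ u : 𝒱, (1 - σ^2) * ⟪A u, u⟫ ≤ Sfn u := by
      intro u
      by_cases hu : u = 0
      · have hz : Sfn 0 = 0 := by
          rw [hSfn]
          apply Finset.sum_eq_zero
          intro i _
          simp
        rw [hu, hz]
        simp
      · have hq := hApos u hu
        have hsne : Real.sqrt ⟪A u, u⟫ ≠ 0 := ne_of_gt (Real.sqrt_pos.mpr hq)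
        have huK := hscale u hu
        have hb : Real.sqrt ⟪A (Eop ((Real.sqrt ⟪A u, u⟫)⁻¹ • u)),
            Eop ((Real.sqrt ⟪A u, u⟫)⁻¹ • u)⟫
            ≤ Real.sqrt ⟪A (Eop vs), Eop vs⟫ := hmax huK
        rw [← hσdef] at hb
        have hb2 : ⟪A (Eop ((Real.sqrt ⟪A u, u⟫)⁻¹ • u)),
            Eop ((Real.sqrt ⟪A u, u⟫)⁻¹ • u)⟫ ≤ σ^2 := by
          have h0' : 0 ≤ Real.sqrt ⟪A (Eop ((Real.sqrt ⟪A u, u⟫)⁻¹ • u)),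
              Eop ((Real.sqrt ⟪A u, u⟫)⁻¹ • u)⟫ := Real.sqrt_nonneg _
          have hsq := Real.sq_sqrt (hA0 (Eop ((Real.sqrt ⟪A u, u⟫)⁻¹ • u)))
          nlinarith [hb, h0', hσnn, hsq]
        have hsc : ⟪A (Eop ((Real.sqrt ⟪A u, u⟫)⁻¹ • u)), Eop ((Real.sqrt ⟪A u, u⟫)⁻¹ • u)⟫
            = (Real.sqrt ⟪A u, u⟫)⁻¹ * ((Real.sqrt ⟪A u, u⟫)⁻¹ * ⟪A (Eop u), Eop u⟫) := by
          rw [map_smul, map_smul, real_inner_smul_left, real_inner_smul_right]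
        have hs2 : (Real.sqrt ⟪A u, u⟫)⁻¹ * (Real.sqrt ⟪A u, u⟫)⁻¹ * ⟪A u, u⟫ = 1 := by
          rw [show ⟪A u, u⟫ = Real.sqrt ⟪A u, u⟫ * Real.sqrt ⟪A u, u⟫ from
            (Real.mul_self_sqrt (hA0 u)).symm]
          field_simp
          rw [Real.sqrt_sq (Real.sqrt_nonneg _)]
        have h6 : (Real.sqrt ⟪A u, u⟫)⁻¹ * ((Real.sqrt ⟪A u, u⟫)⁻¹ * ⟪A (Eop u), Eop u⟫)
            ≤ σ^2 := by rw [← hsc]; exact hb2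
        have h7 := mul_le_mul_of_nonneg_right h6 (le_of_lt hq)
        have hEu : ⟪A (Eop u), Eop u⟫ ≤ σ^2 * ⟪A u, u⟫ := by
          have h8 : ⟪A (Eop u), Eop u⟫
              = (Real.sqrt ⟪A u, u⟫)⁻¹ * ((Real.sqrt ⟪A u, u⟫)⁻¹ * ⟪A (Eop u), Eop u⟫)
                * ⟪A u, u⟫ := by
            have e9 : (Real.sqrt ⟪A u, u⟫)⁻¹ * ((Real.sqrt ⟪A u, u⟫)⁻¹ * ⟪A (Eop u), Eop u⟫)
                * ⟪A u, u⟫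
                = ((Real.sqrt ⟪A u, u⟫)⁻¹ * (Real.sqrt ⟪A u, u⟫)⁻¹ * ⟪A u, u⟫)
                  * ⟪A (Eop u), Eop u⟫ := by ring
            rw [e9, hs2, one_mul]
          rw [h8]
          exact h7
        have hm3 := hMain3 u
        rw [← hEopF u] at hm3
        linarith [hEu, hm3]
    -- inner-set facts
    have hinner_nn : ∀ v : 𝒱, ∀ z ∈ {x : ℝ | ∃ w : ∀ j, V j, (∑ j : Fin J, P j (w j)) = v ∧
        x = ∑ i : Fin J,
          ⟪Aj i (PP i (∑ j ∈ Finset.univ.filter (fun j => i < j), P j (w j))),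
            PP i (∑ j ∈ Finset.univ.filter (fun j => i < j), P j (w j))⟫}, 0 ≤ z := by
      rintro v z ⟨x, -, rfl⟩
      exact Finset.sum_nonneg fun i _ => hAj0 _ _
    have hinner_ne : ∀ v : 𝒱, Set.Nonempty {x : ℝ | ∃ w : ∀ j, V j,
        (∑ j : Fin J, P j (w j)) = v ∧
        x = ∑ i : Fin J,
          ⟪Aj i (PP i (∑ j ∈ Finset.univ.filter (fun j => i < j), P j (w j))),
            PP i (∑ j ∈ Finset.univ.filter (fun j => i < j), P j (w j))⟫} := by
      intro v
      obtain ⟨x, hx⟩ := hdecomp v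
      exact ⟨_, x, hx, rfl⟩
    have hDub : ∀ v : 𝒱, ⟪A v, v⟫ = 1 → sInf {x : ℝ | ∃ w : ∀ j, V j,
        (∑ j : Fin J, P j (w j)) = v ∧
        x = ∑ i : Fin J,
          ⟪Aj i (PP i (∑ j ∈ Finset.univ.filter (fun j => i < j), P j (w j))),
            PP i (∑ j ∈ Finset.univ.filter (fun j => i < j), P j (w j))⟫}
        ≤ 1/(1-σ^2) - 1 := by
      intro v hv
      obtain ⟨x, hx1, hx2⟩ := hKB v hv (σ^2) hσlt hSlb
      refine le_trans (csInf_le ⟨0, fun z hz => hinner_nn v z hz⟩ ⟨x, hx1, rfl⟩) hx2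
    have hDvs_lb : 1 / Sfn vs - 1 ≤ sInf {x : ℝ | ∃ w : ∀ j, V j,
        (∑ j : Fin J, P j (w j)) = vs ∧
        x = ∑ i : Fin J,
          ⟪Aj i (PP i (∑ j ∈ Finset.univ.filter (fun j => i < j), P j (w j))),
            PP i (∑ j ∈ Finset.univ.filter (fun j => i < j), P j (w j))⟫} := by
      apply le_csInf (hinner_ne vs)
      rintro z ⟨x, hx1, hz⟩
      have hka := hKA vs hvsK' x hx1
      rw [← hz] at hka
      rw [sub_le_iff_le_add, div_le_iff₀ hSvspos]
      nlinarith [hka]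
    have hc0ub : c0 ≤ 1/(1-σ^2) - 1 := by
      rw [hc0]
      apply Real.sSup_le
      · rintro y ⟨v, hv1, rfl⟩
        exact hDub v (Real.sqrt_eq_one.mp hv1)
      · have hpos2 : 0 < 1 - σ^2 := by linarith
        have : 1 ≤ 1/(1-σ^2) := by
          rw [le_div_iff₀ hpos2]
          nlinarith [sq_nonneg σ]
        linarith
    have hc0ge : sInf {x : ℝ | ∃ w : ∀ j, V j,
        (∑ j : Fin J, P j (w j)) = vs ∧
        x = ∑ i : Fin J,
          ⟪Aj i (PP i (∑ j ∈ Finset.univ.filter (fun j => i < j), P j (w j))),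
            PP i (∑ j ∈ Finset.univ.filter (fun j => i < j), P j (w j))⟫} ≤ c0 := by
      rw [hc0]
      apply le_csSup
      · refine ⟨1/(1-σ^2) - 1, ?_⟩
        rintro y ⟨v, hv1, rfl⟩
        exact hDub v (Real.sqrt_eq_one.mp hv1)
      · exact ⟨vs, Real.sqrt_eq_one.mpr hvsK', rfl⟩
    have hc0nn : 0 ≤ c0 :=
      le_trans (Real.sInf_nonneg fun z hz => hinner_nn vs z hz) hc0ge
    rw [hSEsup]
    have h1c : 0 < 1 + c0 := by linarith
    have hA1 : σ^2 ≤ 1 - 1/(1+c0) := by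
      have h10 : 1 / Sfn vs ≤ 1 + c0 := by linarith [hDvs_lb, hc0ge]
      have h11 : 1 / (1+c0) ≤ Sfn vs := by
        rw [div_le_iff₀ hSvspos] at h10
        rw [div_le_iff₀ h1c]
        linarith [h10, mul_comm (Sfn vs) (1+c0)]
      linarith [hSvs, h11]
    have hA2 : 1 - 1/(1+c0) ≤ σ^2 := by
      have h12 : 1 + c0 ≤ 1 / (1-σ^2) := by linarith [hc0ub]
      have hpos2 : 0 < 1 - σ^2 := by linarith
      have h13 : (1 - σ^2) * (1 + c0) ≤ 1 := by
        rw [le_div_iff₀ hpos2] at h12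
        linarith [h12, mul_comm (1+c0) (1-σ^2)]
      have h14 : 1 - σ^2 ≤ 1/(1+c0) := by
        rw [le_div_iff₀ h1c]
        linarith [h13]
      linarith [h14]
    linarith [hA1, hA2]
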